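/- Let γ ∈ [1/2, 1), T a finite set, R₁ : T → ℝ with non-constant discounted return G₁, and α > 0 with G₁(ξ) ≤ 1/(2α) for all ξ. Then there is no R₂ : T → ℝ whose discounted return G₂ satisfies G₂(ξ) = G₁(ξ) - α·G₁(ξ)² for all ξ ∈ T^ℕ. -/

import Mathlib

/-- No Markovian reward realizes the quadratic utility G₁ - α·G₁² of a non-constant
return bounded above by 1/(2α). -/
theorem stmt_6 (γ : ℝ) (hγ : 1/2 ≤ γ) (hγ1 : γ < 1)
    (T : Type*) [Fintype T]
    (R₁ : T → ℝ) (α : ℝ) (hα : 0 < α)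
    (hbd : ∀ ξ : ℕ → T, (∑' j : ℕ, γ^j * R₁ (ξ j)) ≤ 1/(2*α))
    (hnc : ¬ ∀ ξ ξ' : ℕ → T,
      (∑' j : ℕ, γ^j * R₁ (ξ j)) = ∑' j : ℕ, γ^j * R₁ (ξ' j)) :
    ¬ ∃ R₂ : T → ℝ, ∀ ξ : ℕ → T,
      (∑' j : ℕ, γ^j * R₂ (ξ j)) =
        (∑' j : ℕ, γ^j * R₁ (ξ j)) - α * (∑' j : ℕ, γ^j * R₁ (ξ j))^2 := by
  rintro ⟨R₂, hR₂⟩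
  push_neg at hnc
  obtain ⟨ξ, ξ', hab⟩ := hnc
  have hγ0 : (0:ℝ) ≤ γ := by linarith
  have hγpos : (0:ℝ) < γ := by linarith
  set a := ∑' j : ℕ, γ^j * R₁ (ξ j) with ha
  set b := ∑' j : ℕ, γ^j * R₁ (ξ' j) with hb
  have hsum : ∀ (R : T → ℝ) (ζ : ℕ → T), Summable (fun j => γ^j * R (ζ j)) := by
    intro R ζ
    apply Summable.of_norm_bounded
      ((summable_geometric_of_lt_one hγ0 hγ1).mul_left (∑ t, |R t|))
    intro j
    rw [norm_mul, norm_pow, Real.norm_eq_abs, abs_of_nonneg hγ0, Real.norm_eq_abs,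
      mul_comm]
    gcongr
    exact Finset.single_le_sum (fun t _ => abs_nonneg (R t)) (Finset.mem_univ (ζ j))
  have hshift : ∀ (R : T → ℝ) (s : T) (ζ : ℕ → T),
      (∑' j : ℕ, γ^j * R ((fun n => Nat.casesOn n s ζ) j))
        = R s + γ * ∑' j : ℕ, γ^j * R (ζ j) := by
    intro R s ζ
    rw [Summable.tsum_eq_zero_add (hsum R (fun n => Nat.casesOn n s ζ))]
    simp only [pow_zero, one_mul]
    congr 1
    rw [← tsum_mul_left]
    congr 1 with n
    ring
  have key : ∀ s : T, 2 * R₁ s = (1-γ)*(a+b) := by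
    intro s
    have h1 := hR₂ (fun n => Nat.casesOn n s ξ)
    have h2 := hR₂ (fun n => Nat.casesOn n s ξ')
    rw [hshift R₂ s ξ, hshift R₁ s ξ] at h1
    rw [hshift R₂ s ξ', hshift R₁ s ξ'] at h2
    have h3 := hR₂ ξ
    have h4 := hR₂ ξ'
    rw [← ha] at h1 h3
    rw [← hb] at h2 h4
    have hd : γ * α * (a - b) * ((a + b) - (2 * R₁ s + γ * (a + b))) = 0 := by
      nlinarith [h1, h2, h3, h4]
    have hne : γ * α * (a - b) ≠ 0 := by
      apply mul_ne_zero (mul_ne_zero (ne_of_gt hγpos) (ne_of_gt hα))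
      exact sub_ne_zero_of_ne hab
    have := (mul_eq_zero.mp hd).resolve_left hne
    linarith
  -- R₁ is constant, so a = b, contradiction
  have hconst : ∀ s : T, R₁ s = (1-γ)*(a+b)/2 := fun s => by have := key s; linarith
  have hval : ∀ ζ : ℕ → T, (∑' j : ℕ, γ^j * R₁ (ζ j)) = (1-γ)*(a+b)/2 * (1-γ)⁻¹ := by
    intro ζ
    have : (fun j : ℕ => γ^j * R₁ (ζ j)) = fun j : ℕ => γ^j * ((1-γ)*(a+b)/2) := by
      funext j; rw [hconst (ζ j)]
    rw [this, tsum_mul_right, tsum_geometric_of_lt_one hγ0 hγ1, mul_comm]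
  exact hab ((hval ξ).trans (hval ξ').symm)
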